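/- Let F : ℝ³ → ℝ be any C¹-smooth convex function with ∂F/∂uᵢ(u) = aᵢ(e^{u₁}, e^{u₂}, e^{u₃}) for all u ∈ ℝ³, and let A = {u ∈ ℝ³ : u₁+u₂+u₃ = 0 and e^{uᵢ} + e^{uⱼ} > e^{u_k} for all permutations {i,j,k} = {1,2,3}}. Then F is strictly convex on A: for all u ≠ v in A such that the segment [u,v] is contained in A, F((u+v)/2) < (F(u)+F(v))/2. -/

import Mathlib

noncomputable section

open Real Set Filter

/-- The generalized Euclidean triangle angle `aᵢ(x)` opposite the side of length `x i`,
for a generalized triangle with (positive) side lengths `x 0, x 1, x 2`: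
it is `π` if `x i ≥ x j + x k`, `0` if some other side is at least the sum of the
remaining two, and otherwise the usual Euclidean angle `arccos((xⱼ²+x_k²−xᵢ²)/(2xⱼx_k))`. -/
noncomputable def genAngle (x : Fin 3 → ℝ) (i : Fin 3) : ℝ :=
  if x (i + 1) + x (i + 2) ≤ x i then Real.pi
  else if x i + x (i + 2) ≤ x (i + 1) ∨ x i + x (i + 1) ≤ x (i + 2) then 0
  else Real.arccos
    ((x (i + 1) ^ 2 + x (i + 2) ^ 2 - x i ^ 2) / (2 * x (i + 1) * x (i + 2)))

/-- The set `A = {u ∈ ℝ³ : u₁+u₂+u₃ = 0, e^{uᵢ} + e^{uⱼ} > e^{u_k} for all permutations}`. -/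
def domA : Set (Fin 3 → ℝ) :=
  {u | (u 0 + u 1 + u 2 = 0) ∧
    ∀ i : Fin 3, Real.exp (u i) < Real.exp (u (i + 1)) + Real.exp (u (i + 2))}

/-! ### Auxiliary lemmas -/

/-- Heron-type symmetric quantity `16·Area²`. -/
noncomputable def heronQ (x : Fin 3 → ℝ) : ℝ :=
  (x 0 + x 1 + x 2) * (x 1 + x 2 - x 0) * (x 0 + x 2 - x 1) * (x 0 + x 1 - x 2)

lemma fin3_add2 : ∀ i : Fin 3, i + 1 + 1 = i + 2 := by decide
lemma fin3_add3 : ∀ i : Fin 3, i + 2 + 1 = i := by decide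
lemma fin3_add4 : ∀ i : Fin 3, i + 1 + 2 = i := by decide
lemma fin3_add5 : ∀ i : Fin 3, i + 2 + 2 = i + 1 := by decide

lemma heronQ_rot (x : Fin 3 → ℝ) (i : Fin 3) :
    heronQ x = 4 * (x (i+1) * x (i+2))^2 - (x (i+1)^2 + x (i+2)^2 - x i ^2)^2 := by
  fin_cases i <;>
    simp only [Fin.mk_zero, Fin.mk_one, show (⟨2, by omega⟩ : Fin 3) = 2 from rfl,
      show ((0:Fin 3)+1)=1 by decide, show ((0:Fin 3)+2)=2 by decide,
      show ((1:Fin 3)+1)=2 by decide, show ((1:Fin 3)+2)=0 by decide,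
      show ((2:Fin 3)+1)=0 by decide, show ((2:Fin 3)+2)=1 by decide, heronQ] <;> ring

lemma prod_rot (x : Fin 3 → ℝ) (i : Fin 3) :
    x i * (x (i+1) * x (i+2)) = x 0 * (x 1 * x 2) := by
  fin_cases i <;>
    simp only [Fin.mk_zero, Fin.mk_one, show (⟨2, by omega⟩ : Fin 3) = 2 from rfl,
      show ((0:Fin 3)+1)=1 by decide, show ((0:Fin 3)+2)=2 by decide,
      show ((1:Fin 3)+1)=2 by decide, show ((1:Fin 3)+2)=0 by decide,
      show ((2:Fin 3)+1)=0 by decide, show ((2:Fin 3)+2)=1 by decide] <;> ring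

lemma heronQ_pos {x : Fin 3 → ℝ} (hxpos : ∀ j, 0 < x j)
    (htri : ∀ j : Fin 3, x j < x (j + 1) + x (j + 2)) : 0 < heronQ x := by
  have h0 := htri 0; have h1 := htri 1; have h2 := htri 2
  simp only [show ((0:Fin 3)+1)=1 by decide, show ((0:Fin 3)+2)=2 by decide,
    show ((1:Fin 3)+1)=2 by decide, show ((1:Fin 3)+2)=0 by decide,
    show ((2:Fin 3)+1)=0 by decide, show ((2:Fin 3)+2)=1 by decide] at h0 h1 h2
  have p0 := hxpos 0; have p1 := hxpos 1; have p2 := hxpos 2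
  have f1 : 0 < x 0 + x 1 + x 2 := by linarith
  have f2 : 0 < x 1 + x 2 - x 0 := by linarith
  have f3 : 0 < x 0 + x 2 - x 1 := by linarith
  have f4 : 0 < x 0 + x 1 - x 2 := by linarith
  unfold heronQ
  positivity

lemma sin_genAngle {u : Fin 3 → ℝ} (hu : u ∈ domA) (i : Fin 3) :
    Real.sin (genAngle (fun j => Real.exp (u j)) i)
      = Real.sqrt (heronQ (fun j => Real.exp (u j)) / 4) * Real.exp (u i) := by
  set x : Fin 3 → ℝ := fun j => Real.exp (u j) with hx
  have hxpos : ∀ j, 0 < x j := fun j => Real.exp_pos _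
  have htri : ∀ j : Fin 3, x j < x (j + 1) + x (j + 2) := hu.2
  have hprod : x 0 * (x 1 * x 2) = 1 := by
    simp only [hx, ← Real.exp_add, Real.exp_eq_one_iff]
    linarith [hu.1]
  have hQpos : 0 < heronQ x := heronQ_pos hxpos htri
  have hrot : x i * (x (i+1) * x (i+2)) = 1 := by rw [prod_rot x i, hprod]
  show Real.sin (genAngle x i) = Real.sqrt (heronQ x / 4) * x i
  rw [genAngle, if_neg (not_le.mpr (htri i)), if_neg]
  · rw [Real.sin_arccos]
    have hbc : x (i+1) * x (i+2) = (x i)⁻¹ := by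
      field_simp
      rw [eq_div_iff (hxpos i).ne']
      linear_combination hrot
    have hkey : 1 - ((x (i+1) ^ 2 + x (i+2) ^ 2 - x i ^ 2) / (2 * x (i+1) * x (i+2))) ^ 2
        = heronQ x / 4 * x i ^ 2 := by
      rw [heronQ_rot x i, mul_assoc 2, hbc]
      have hi : x i ≠ 0 := (hxpos i).ne'
      field_simp
      ring
    rw [hkey, Real.sqrt_mul (by positivity), Real.sqrt_sq (hxpos i).le]
  · push_neg
    constructor
    · have := htri (i + 1)
      rw [fin3_add2, fin3_add4] at this
      linarith
    · have := htri (i + 2)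
      rw [fin3_add3, fin3_add5] at this
      linarith

/-- On `domA`, the angles determine the point. -/
lemma angle_inj {u v : Fin 3 → ℝ} (hu : u ∈ domA) (hv : v ∈ domA)
    (h : ∀ i, genAngle (fun j => Real.exp (u j)) i = genAngle (fun j => Real.exp (v j)) i) :
    u = v := by
  set su : ℝ := Real.sqrt (heronQ (fun j => Real.exp (u j)) / 4) with hsu
  set sv : ℝ := Real.sqrt (heronQ (fun j => Real.exp (v j)) / 4) with hsv
  have hsin : ∀ i, su * Real.exp (u i) = sv * Real.exp (v i) := by
    intro i
    rw [← sin_genAngle hu i, ← sin_genAngle hv i, h i]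
  have hprodu : Real.exp (u 0) * (Real.exp (u 1) * Real.exp (u 2)) = 1 := by
    simp only [← Real.exp_add, Real.exp_eq_one_iff]; linarith [hu.1]
  have hprodv : Real.exp (v 0) * (Real.exp (v 1) * Real.exp (v 2)) = 1 := by
    simp only [← Real.exp_add, Real.exp_eq_one_iff]; linarith [hv.1]
  have hQu : 0 < heronQ (fun j => Real.exp (u j)) :=
    heronQ_pos (fun j => Real.exp_pos _) hu.2
  have hQv : 0 < heronQ (fun j => Real.exp (v j)) :=
    heronQ_pos (fun j => Real.exp_pos _) hv.2
  have hsupos : 0 < su := Real.sqrt_pos.mpr (by positivity)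
  have hsvpos : 0 < sv := Real.sqrt_pos.mpr (by positivity)
  have hcube : su ^ 3 = sv ^ 3 := by
    have e1 : su ^ 3 * (Real.exp (u 0) * (Real.exp (u 1) * Real.exp (u 2)))
        = sv ^ 3 * (Real.exp (v 0) * (Real.exp (v 1) * Real.exp (v 2))) := by
      calc su ^ 3 * (Real.exp (u 0) * (Real.exp (u 1) * Real.exp (u 2)))
          = (su * Real.exp (u 0)) * ((su * Real.exp (u 1)) * (su * Real.exp (u 2))) := by ring
        _ = (sv * Real.exp (v 0)) * ((sv * Real.exp (v 1)) * (sv * Real.exp (v 2))) := by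
            rw [hsin 0, hsin 1, hsin 2]
        _ = sv ^ 3 * (Real.exp (v 0) * (Real.exp (v 1) * Real.exp (v 2))) := by ring
    rwa [hprodu, hprodv, mul_one, mul_one] at e1
  have hs : su = sv := by nlinarith [hcube, mul_pos hsupos hsvpos, sq_nonneg (su - sv), sq_nonneg (su + sv)]
  funext j
  have := hsin j
  rw [hs] at this
  have : Real.exp (u j) = Real.exp (v j) := by
    exact mul_left_cancel₀ hsvpos.ne' this
  exact Real.exp_injective this

/-- The supporting-hyperplane inequality for a `C¹` convex function. -/
lemma convex_support {F : (Fin 3 → ℝ) → ℝ} (hF : ContDiff ℝ 1 F)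
    (hconv : ConvexOn ℝ Set.univ F) (x y : Fin 3 → ℝ) :
    F x + fderiv ℝ F x (y - x) ≤ F y := by
  have hdF : Differentiable ℝ F := hF.differentiable one_ne_zero
  set g : ℝ → ℝ := fun t => F (x + t • (y - x)) with hg
  have hgd : HasDerivAt g (fderiv ℝ F (x + (0:ℝ) • (y - x)) (y - x)) 0 := by
    have hline : HasDerivAt (fun t : ℝ => x + t • (y - x)) (y - x) 0 := by
      simpa using ((hasDerivAt_id (0:ℝ)).smul_const (y - x)).const_add x
    exact (hdF _).hasFDerivAt.comp_hasDerivAt 0 hline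
  have hgc : ConvexOn ℝ Set.univ g := by
    refine ⟨convex_univ, fun p _ q _ a b ha hb hab => ?_⟩
    have h := hconv.2 (Set.mem_univ (x + p • (y - x))) (Set.mem_univ (x + q • (y - x))) ha hb hab
    have e : x + (a • p + b • q) • (y - x) = a • (x + p • (y - x)) + b • (x + q • (y - x)) := by
      have hx : a • x + b • x = x := by rw [← add_smul, hab, one_smul]
      rw [smul_add, smul_add, smul_smul, smul_smul, smul_eq_mul, smul_eq_mul]
      rw [add_add_add_comm, hx, add_smul]
    show F (x + (a • p + b • q) • (y - x)) ≤ a • F (x + p • (y - x)) + b • F (x + q • (y - x))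
    rw [e]; exact h
  have h := hgc.le_slope_of_hasDerivAt (Set.mem_univ 0) (Set.mem_univ 1) one_pos hgd
  rw [slope_def_field] at h
  simp only [g] at h
  simp only [zero_smul, add_zero, one_smul, add_sub_cancel] at h ⊢
  linarith

/-- any `C¹` convex potential of the angle functions is strictly convex on `A`. -/
theorem strictly_convex_on_domA (F : (Fin 3 → ℝ) → ℝ)
    (hF : ContDiff ℝ 1 F) (hconv : ConvexOn ℝ Set.univ F)
    (hgrad : ∀ (u : Fin 3 → ℝ) (i : Fin 3),
      fderiv ℝ F u (Pi.single i 1) = genAngle (fun j => Real.exp (u j)) i) :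
    ∀ u v : Fin 3 → ℝ, u ∈ domA → v ∈ domA → u ≠ v → segment ℝ u v ⊆ domA →
      F (fun j => (u j + v j) / 2) < (F u + F v) / 2 := by
  intro u v hu hv huv _hseg
  by_contra hcon
  push_neg at hcon
  have hdF : Differentiable ℝ F := hF.differentiable one_ne_zero
  set m : Fin 3 → ℝ := fun j => (u j + v j) / 2 with hm
  have hmrep : m = (1/2 : ℝ) • u + (1/2 : ℝ) • v := by
    funext j
    simp only [hm, Pi.add_apply, Pi.smul_apply, smul_eq_mul]
    ring
  have hle : F m ≤ (F u + F v) / 2 := by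
    have h := hconv.2 (Set.mem_univ u) (Set.mem_univ v)
      (by norm_num : (0:ℝ) ≤ 1/2) (by norm_num : (0:ℝ) ≤ 1/2) (by norm_num)
    rw [hmrep]
    simp only [smul_eq_mul] at h
    linarith
  have heq : F m = (F u + F v) / 2 := le_antisymm hle hcon
  have hsu := convex_support hF hconv m u
  have hsv := convex_support hF hconv m v
  have hz : (u - m) + (v - m) = 0 := by
    funext j
    simp only [hm, Pi.add_apply, Pi.sub_apply, Pi.zero_apply]
    ring
  have hDm0 : fderiv ℝ F m (u - m) + fderiv ℝ F m (v - m) = 0 := by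
    rw [← map_add, hz, map_zero]
  have heu : F m + fderiv ℝ F m (u - m) = F u := by linarith
  have hev : F m + fderiv ℝ F m (v - m) = F v := by linarith
  have key : ∀ w : Fin 3 → ℝ, F m + fderiv ℝ F m (w - m) = F w →
      fderiv ℝ F w = fderiv ℝ F m := by
    intro w hw
    set D := fderiv ℝ F m with hD
    have hmin : ∀ z, F w - D w ≤ F z - D z := by
      intro z
      have h1 := convex_support hF hconv m z
      have h2 : D (z - m) = D z - D m := map_sub _ _ _
      have h3 : D (w - m) = D w - D m := map_sub _ _ _
      rw [h3] at hw
      rw [← hD, h2] at h1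
      linarith
    have hloc : IsLocalMin (fun z => F z - D z) w :=
      Filter.Eventually.of_forall hmin
    have hd := hloc.fderiv_eq_zero
    have hfd : fderiv ℝ (fun z => F z - D z) w = fderiv ℝ F w - D := by
      rw [fderiv_fun_sub (hdF w) D.differentiableAt, D.fderiv]
    rw [hfd] at hd
    exact sub_eq_zero.mp hd
  have hgradeq : fderiv ℝ F u = fderiv ℝ F v := (key u heu).trans (key v hev).symm
  have hang : ∀ i, genAngle (fun j => Real.exp (u j)) i
      = genAngle (fun j => Real.exp (v j)) i := by
    intro i
    rw [← hgrad u i, ← hgrad v i, hgradeq]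
  exact huv (angle_inj hu hv hang)
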